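/- arXiv:2010.04932 — 4 statements merged into one kernel-verified Lean document; each statement's English description precedes it below -/
import Mathlib

section
/- Let $a \geq 0$, $p > 1$, and suppose $\psi : \mathbb{R} \to \mathbb{R}$ is a $C^2$ solution of $\psi'' + a\psi + \psi^p = 0$ on $\mathbb{R}$ with $\psi(t) > 0$ for all $t \in \mathbb{R}$. Then no such $\psi$ exists; i.e., every solution with positive initial value becomes non-positive in finite time or fails to be globally defined as a positive function. -/
theorem stmt_7 (a p : ℝ) (ha : 0 ≤ a) (hp : 1 < p) (ψ : ℝ → ℝ)
    (hψ : ContDiff ℝ 2 ψ)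
    (hode : ∀ t, deriv (deriv ψ) t + a * ψ t + ψ t ^ p = 0) :
    ¬ (∀ t : ℝ, 0 < ψ t) := by
  intro hpos
  have hψdiff : Differentiable ℝ ψ := hψ.differentiable two_ne_zero
  -- second derivative is negative
  have hneg : ∀ t, deriv (deriv ψ) t < 0 := by
    intro t
    have h := hode t
    have h1 : 0 < ψ t ^ p := Real.rpow_pos_of_pos (hpos t) p
    nlinarith [mul_nonneg ha (hpos t).le]
  -- deriv ψ is strictly antitone
  have hanti : StrictAnti (deriv ψ) := strictAnti_of_deriv_neg hneg
  -- linear upper bound: for any real s, the function ψ t - (deriv ψ s) * t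
  -- has derivative deriv ψ t - deriv ψ s
  have hder : ∀ (s x : ℝ),
      deriv (fun t => ψ t - deriv ψ s * t) x = deriv ψ x - deriv ψ s := by
    intro s x
    have h : HasDerivAt (fun t => ψ t - deriv ψ s * t)
        (deriv ψ x - deriv ψ s * 1) x :=
      ((hψdiff x).hasDerivAt).sub ((hasDerivAt_id x).const_mul (deriv ψ s))
    simpa using h.deriv
  rcases lt_or_ge (deriv ψ 1) 0 with hmneg | hmpos
  · set m := deriv ψ 1 with hm
    have hA : AntitoneOn (fun t => ψ t - m * t) (Set.Ici 1) := by
      apply antitoneOn_of_deriv_nonpos (convex_Ici 1)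
      · exact ((hψdiff.sub ((differentiable_id.const_mul m))).continuous).continuousOn
      · intro x hx
        exact ((hψdiff x).sub ((differentiable_id.const_mul m) x)).differentiableWithinAt
      · intro x hx
        rw [interior_Ici] at hx
        rw [hder 1 x]
        have := hanti hx
        linarith
    obtain ⟨T, hT⟩ : ∃ T : ℝ, T = 1 + ψ 1 / (-m) := ⟨_, rfl⟩
    have hd : 0 < ψ 1 / (-m) := div_pos (hpos 1) (by linarith)
    have hT1 : 1 ≤ T := by rw [hT]; linarith
    have hb := hA (Set.self_mem_Ici) (Set.mem_Ici.mpr hT1) hT1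
    have hineq : ψ T ≤ ψ 1 + m * (T - 1) := by dsimp at hb; linarith
    have hm0 : m ≠ 0 := ne_of_lt hmneg
    have hmT : m * (T - 1) = -ψ 1 := by
      rw [hT, add_sub_cancel_left, div_neg, mul_neg, ← mul_div_assoc, mul_div_cancel_left₀ _ hm0]
    have := hpos T
    linarith [hmT ▸ hineq]
  · set c := deriv ψ 0 with hc
    have hcpos : 0 < c := lt_of_le_of_lt hmpos (hanti one_pos)
    have hM : MonotoneOn (fun t => ψ t - c * t) (Set.Iic 0) := by
      apply monotoneOn_of_deriv_nonneg (convex_Iic 0)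
      · exact ((hψdiff.sub ((differentiable_id.const_mul c))).continuous).continuousOn
      · intro x hx
        exact ((hψdiff x).sub ((differentiable_id.const_mul c) x)).differentiableWithinAt
      · intro x hx
        rw [interior_Iic] at hx
        rw [hder 0 x]
        have := hanti hx
        linarith
    obtain ⟨T, hT⟩ : ∃ T : ℝ, T = -(ψ 0 / c) := ⟨_, rfl⟩
    have hd : 0 < ψ 0 / c := div_pos (hpos 0) hcpos
    have hT0 : T ≤ 0 := by rw [hT]; linarith
    have hb := hM (Set.mem_Iic.mpr hT0) (Set.self_mem_Iic) hT0
    have hineq : ψ T ≤ ψ 0 + c * T := by dsimp at hb; linarith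
    have hc0 : c ≠ 0 := ne_of_gt hcpos
    have hcT : c * T = -ψ 0 := by
      rw [hT]; field_simp
    have := hpos T
    linarith [hcT ▸ hineq]
end

section
/- Let $b > 0$, $a < 0$, $p > 1$, and suppose $\overline{u} : [0, \infty) \to (0, \infty)$ is a bounded $C^2$ function satisfying $\overline{u}'' + b\overline{u}' + a\overline{u} + \overline{u}^p = g(t)$ where $|g(t)| \leq C_0 \overline{u}(t)^p e^{-t}$, with $\overline{u}$ and $\overline{u}'$ bounded. Then $\overline{u}'(t) \to 0$ and $\overline{u}''(t) \to 0$ as $t \to \infty$, and $\overline{u}(t)$ converges either to $0$ or to $(-a)^{\frac{1}{p-1}}$ as $t \to \infty$. -/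
open Filter Set

lemma lip_aux (f : ℝ → ℝ) (hf : Differentiable ℝ f) {T K : ℝ}
    (hK : ∀ x ∈ Ici T, |deriv f x| ≤ K) :
    ∀ s ∈ Ici T, ∀ t ∈ Ici T, |f s - f t| ≤ K * |s - t| := by
  intro s hs t ht
  have := Convex.norm_image_sub_le_of_norm_deriv_le (f := f) (s := Ici T)
    (fun x _ => hf x) (fun x hx => by
      simpa [Real.norm_eq_abs] using hK x hx) (convex_Ici T) ht hs
  simpa [Real.norm_eq_abs] using this

lemma barbalat (f : ℝ → ℝ) (hf : Continuous f) (K : ℝ) (hK : 0 < K)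
    (hlip : ∀ s ∈ Ici (0:ℝ), ∀ t ∈ Ici (0:ℝ), |f s - f t| ≤ K * |s - t|)
    (hint : ∀ δ > (0:ℝ), ∀ ε > (0:ℝ), ∃ T, 0 ≤ T ∧ ∀ t ≥ T, |∫ s in t..(t+δ), f s| ≤ ε) :
    Tendsto f atTop (nhds 0) := by
  rw [Metric.tendsto_atTop]
  intro ε hε
  set δ : ℝ := ε / (4 * K) with hδdef
  have hδ : 0 < δ := by positivity
  obtain ⟨T, hT0, hT⟩ := hint δ hδ (δ * ε / 8) (by positivity)
  refine ⟨T, fun t htT => ?_⟩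
  have ht0 : (0:ℝ) ≤ t := le_trans hT0 htT
  rw [Real.dist_eq, sub_zero]
  by_contra hcon
  push_neg at hcon
  have hint' := hT t htT
  have key : ∀ s ∈ Icc t (t + δ), |f s - f t| ≤ ε / 4 := by
    intro s hs
    have h1 : |f s - f t| ≤ K * |s - t| := hlip s (le_trans ht0 hs.1) t ht0
    have h2 : |s - t| ≤ δ := by
      rw [abs_of_nonneg (by linarith [hs.1])]; linarith [hs.2]
    calc |f s - f t| ≤ K * δ := le_trans h1 (by nlinarith)
      _ = ε / 4 := by field_simp [hδdef]; rw [hδdef]; field_simp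
  have hfi : IntervalIntegrable f MeasureTheory.volume t (t + δ) :=
    hf.intervalIntegrable t (t + δ)
  have habs := le_abs_self (∫ s in t..(t+δ), f s)
  have habs' := neg_abs_le (∫ s in t..(t+δ), f s)
  rcases abs_cases (f t) with ⟨heq', hsgn⟩ | ⟨heq', hsgn⟩
  · have hft : ε ≤ f t := by rw [heq'] at hcon; exact hcon
    have hlow : ∀ s ∈ Icc t (t + δ), ε / 2 ≤ f s := by
      intro s hs
      have := (abs_le.mp (key s hs)).1
      linarith
    have : ∫ s in t..(t+δ), (ε/2) ≤ ∫ s in t..(t+δ), f s :=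
      intervalIntegral.integral_mono_on (by linarith)
        intervalIntegrable_const hfi hlow
    rw [intervalIntegral.integral_const] at this
    simp only [add_sub_cancel_left, smul_eq_mul] at this
    nlinarith
  · have hft : f t ≤ -ε := by rw [heq'] at hcon; linarith
    have hhigh : ∀ s ∈ Icc t (t + δ), f s ≤ -(ε / 2) := by
      intro s hs
      have := (abs_le.mp (key s hs)).2
      linarith
    have : ∫ s in t..(t+δ), f s ≤ ∫ s in t..(t+δ), (-(ε/2)) :=
      intervalIntegral.integral_mono_on (by linarith)
        hfi intervalIntegrable_const hhigh
    rw [intervalIntegral.integral_const] at this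
    simp only [add_sub_cancel_left, smul_eq_mul] at this
    nlinarith

set_option maxHeartbeats 4000000 in
theorem stmt_14 (a b p C₀ : ℝ) (hb : 0 < b) (ha : a < 0) (hp : 1 < p) (hC₀ : 0 < C₀)
    (u g : ℝ → ℝ) (hu : ContDiff ℝ 2 u)
    (hupos : ∀ t ≥ (0 : ℝ), 0 < u t)
    (hbdd : ∃ M : ℝ, ∀ t ≥ (0 : ℝ), |u t| + |deriv u t| ≤ M)
    (heq : ∀ t ≥ (0 : ℝ),
      deriv (deriv u) t + b * deriv u t + a * u t + u t ^ p = g t)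
    (hg : ∀ t ≥ (0 : ℝ), |g t| ≤ C₀ * u t ^ p * Real.exp (-t)) :
    Tendsto (deriv u) atTop (nhds 0) ∧
    Tendsto (deriv (deriv u)) atTop (nhds 0) ∧
    (Tendsto u atTop (nhds 0) ∨ Tendsto u atTop (nhds ((-a) ^ (1 / (p - 1))))) := by
  obtain ⟨M, hM⟩ := hbdd
  -- regularity
  have hcd1 : ContDiff ℝ 1 (deriv u) := by
    have h : ContDiff ℝ ((1:WithTop ℕ∞)+1) u := by norm_num; exact hu
    exact (contDiff_succ_iff_deriv.mp h).2.2
  have hu1 : Differentiable ℝ u := hu.differentiable two_ne_zero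
  have hu2 : Differentiable ℝ (deriv u) := hcd1.differentiable one_ne_zero
  have hcu : Continuous u := hu1.continuous
  have hc1 : Continuous (deriv u) := hu2.continuous
  have hc2 : Continuous (deriv (deriv u)) := by
    have h : ContDiff ℝ ((0:WithTop ℕ∞)+1) (deriv u) := by norm_num; exact hcd1
    exact ((contDiff_succ_iff_deriv.mp h).2.2).continuous
  -- bounds
  have hMu : ∀ t ≥ (0:ℝ), |u t| ≤ M := fun t ht => by
    have := hM t ht; have := abs_nonneg (deriv u t); linarith
  have hMu' : ∀ t ≥ (0:ℝ), |deriv u t| ≤ M := fun t ht => by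
    have := hM t ht; have := abs_nonneg (u t); linarith
  have hM0 : 0 < M :=
    lt_of_lt_of_le (hupos 0 le_rfl) (le_trans (le_abs_self _) (hMu 0 le_rfl))
  have hup : ∀ t ≥ (0:ℝ), u t ≤ M := fun t ht => le_trans (le_abs_self _) (hMu t ht)
  have hp0 : (0:ℝ) < p := lt_trans one_pos hp
  have hupow : ∀ t ≥ (0:ℝ), u t ^ p ≤ M ^ p := fun t ht =>
    Real.rpow_le_rpow (hupos t ht).le (hup t ht) hp0.le
  have hupownn : ∀ t ≥ (0:ℝ), (0:ℝ) ≤ u t ^ p := fun t ht =>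
    Real.rpow_nonneg (hupos t ht).le p
  have hMp : (0:ℝ) < M ^ p := Real.rpow_pos_of_pos hM0 p
  have hgb : ∀ t ≥ (0:ℝ), |g t| ≤ C₀ * M ^ p * Real.exp (-t) := fun t ht => by
    have h1 := hg t ht
    have h2 := hupow t ht
    have h3 := Real.exp_pos (-t)
    nlinarith [mul_nonneg (mul_pos hC₀ h3).le (sub_nonneg.mpr h2)]
  -- energy function
  set C₁ : ℝ := C₀ * M ^ p * M with hC₁def
  have hC₁ : 0 < C₁ := mul_pos (mul_pos hC₀ hMp) hM0
  set E : ℝ → ℝ := fun t => (deriv u t)^2/2 + a*(u t)^2/2 + (u t)^(p+1)/(p+1)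
      + C₁ * Real.exp (-t) with hEdef
  set F : ℝ → ℝ := fun t => deriv u t * deriv (deriv u) t
      + (a * u t + u t ^ p) * deriv u t + -(C₁ * Real.exp (-t)) with hFdef
  have hE : ∀ x : ℝ, HasDerivAt E (F x) x := by
    intro x
    have hd1 : HasDerivAt u (deriv u x) x := (hu1 x).hasDerivAt
    have hd2 : HasDerivAt (deriv u) (deriv (deriv u) x) x := (hu2 x).hasDerivAt
    have A := (hd2.pow 2).div_const 2
    have B := ((hd1.pow 2).div_const 2).const_mul a
    have C := (hd1.rpow_const (Or.inr (by linarith : (1:ℝ) ≤ p + 1))).div_const (p+1)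
    have D := ((Real.hasDerivAt_exp (-x)).comp x (hasDerivAt_neg x)).const_mul C₁
    have hcomb := ((A.add B).add C).add D
    convert hcomb using 1
    rotate_left 2
    · ext t; simp only [hEdef, Function.comp_apply, Pi.add_apply, Pi.pow_apply]; ring
    · have hexp : p + 1 - 1 = p := by ring
      rw [hexp]
      have hne : p + 1 ≠ 0 := by linarith
      push_cast
      field_simp
      ring
    · rfl
    · rfl
  have hrpc : Continuous (fun t => u t ^ p) := hcu.rpow_const (fun x => Or.inr hp0.le)
  have hFc : Continuous F := by
    refine ((hc1.mul hc2).add (((continuous_const.mul hcu).add hrpc).mul hc1)).add ?_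
    exact (continuous_const.mul (Real.continuous_exp.comp continuous_neg)).neg
  have key2 : ∀ x ≥ (0:ℝ), F x ≤ -b * (deriv u x)^2 := by
    intro x hx
    have hg' := hgb x hx
    have heqx := heq x hx
    have hb1 : deriv u x * g x ≤ C₁ * Real.exp (-x) := by
      calc deriv u x * g x ≤ |deriv u x * g x| := le_abs_self _
        _ = |deriv u x| * |g x| := abs_mul _ _
        _ ≤ M * (C₀ * M^p * Real.exp (-x)) :=
            mul_le_mul (hMu' x hx) hg' (abs_nonneg _) hM0.le
        _ = C₁ * Real.exp (-x) := by rw [hC₁def]; ring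
    have hFx : F x = deriv u x * g x - b * (deriv u x)^2 - C₁ * Real.exp (-x) := by
      rw [hFdef, ← heqx]; ring
    rw [hFx]; linarith
  have hsq : Continuous (fun x => (deriv u x)^2) := hc1.pow 2
  have mono : ∀ s t : ℝ, 0 ≤ s → s ≤ t →
      b * (∫ x in s..t, (deriv u x)^2) ≤ E s - E t := by
    intro s t hs hst
    have hftc : ∫ x in s..t, F x = E t - E s :=
      intervalIntegral.integral_eq_sub_of_hasDerivAt (fun x _ => hE x)
        (hFc.intervalIntegrable s t)
    have hmono : ∫ x in s..t, F x ≤ ∫ x in s..t, (-b * (deriv u x)^2) :=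
      intervalIntegral.integral_mono_on hst (hFc.intervalIntegrable s t)
        ((continuous_const.mul hsq).intervalIntegrable s t)
        (fun x hx => key2 x (le_trans hs hx.1))
    rw [intervalIntegral.integral_const_mul, hftc] at hmono
    linarith
  have intnn : ∀ s t : ℝ, s ≤ t → 0 ≤ ∫ x in s..t, (deriv u x)^2 := fun s t hst =>
    intervalIntegral.integral_nonneg hst (fun x _ => sq_nonneg _)
  have lbE : ∀ t ≥ (0:ℝ), a * M^2/2 ≤ E t := by
    intro t ht
    have h1 : (0:ℝ) ≤ (deriv u t)^2/2 := by positivity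
    have habs := abs_le.mp (hMu t ht)
    have husq : (u t)^2 ≤ M^2 := sq_le_sq' habs.1 habs.2
    have h2 : a * M^2/2 ≤ a * (u t)^2/2 := by
      nlinarith [mul_le_mul_of_nonpos_left husq ha.le]
    have h3 : (0:ℝ) ≤ (u t)^(p+1)/(p+1) :=
      div_nonneg (Real.rpow_nonneg (hupos t ht).le _) (by linarith)
    have h4 : (0:ℝ) ≤ C₁ * Real.exp (-t) := by positivity
    rw [hEdef]; dsimp only; linarith
  have step1sq : ∀ δ > (0:ℝ), ∀ ε > (0:ℝ), ∃ T, 0 ≤ T ∧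
      ∀ t ≥ T, |∫ x in t..(t+δ), (deriv u x)^2| ≤ ε := by
    intro δ hδ ε hε
    have hne : (E '' Ici (0:ℝ)).Nonempty := ⟨E 0, 0, Set.mem_Ici.mpr le_rfl, rfl⟩
    have hbb : BddBelow (E '' Ici (0:ℝ)) := by
      refine ⟨a*M^2/2, ?_⟩
      rintro x ⟨t, ht, rfl⟩
      exact lbE t ht
    obtain ⟨x, ⟨T, hT0, rfl⟩, hx⟩ := Real.lt_sInf_add_pos hne (mul_pos hb hε)
    refine ⟨T, hT0, fun t ht => ?_⟩
    have h0t : (0:ℝ) ≤ t := le_trans hT0 ht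
    have h1 : E t ≤ E T := by
      have := mono T t hT0 ht
      nlinarith [intnn T t ht]
    have h2 : sInf (E '' Ici 0) ≤ E (t+δ) := csInf_le hbb ⟨t+δ, Set.mem_Ici.mpr (by linarith), rfl⟩
    have h3 := mono t (t+δ) h0t (by linarith)
    have h4 := intnn t (t+δ) (by linarith)
    rw [abs_of_nonneg h4]
    nlinarith
  -- second derivative bound
  set K : ℝ := C₀ * M^p + b*M + |a| * M + M^p + 1 with hKdef
  have hKpos : 0 < K := by positivity
  have hK2 : ∀ x ∈ Ici (0:ℝ), |deriv (deriv u) x| ≤ K := by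
    intro x hx
    have hx0 : (0:ℝ) ≤ x := hx
    have heqx := heq x hx0
    have e1 : deriv (deriv u) x = g x - (b * deriv u x + (a * u x + u x ^ p)) := by
      linarith
    have hexp1 : Real.exp (-x) ≤ 1 := by
      rw [show (1:ℝ) = Real.exp 0 by simp]
      exact Real.exp_le_exp.mpr (by linarith)
    have t1 : |g x| ≤ C₀ * M ^ p := by
      have h1 := hgb x hx0
      nlinarith [mul_le_mul_of_nonneg_left hexp1 (mul_pos hC₀ hMp).le]
    have t2 : |b * deriv u x| ≤ b * M := by
      rw [abs_mul, abs_of_pos hb]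
      exact mul_le_mul_of_nonneg_left (hMu' x hx0) hb.le
    have t3 : |a * u x| ≤ |a| * M := by
      rw [abs_mul]
      exact mul_le_mul_of_nonneg_left (hMu x hx0) (abs_nonneg a)
    have t4 : |u x ^ p| ≤ M ^ p := by
      rw [abs_of_nonneg (hupownn x hx0)]; exact hupow x hx0
    have tr1 := abs_sub (g x) (b * deriv u x + (a * u x + u x ^ p))
    have tr2 := abs_add_le (b * deriv u x) (a * u x + u x ^ p)
    have tr3 := abs_add_le (a * u x) (u x ^ p)
    rw [e1, hKdef]
    linarith
  -- Lipschitz bound for (deriv u)^2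
  have hdsq : Differentiable ℝ (fun x => (deriv u x)^2) := fun x => (hu2 x).pow 2
  have hderivsq : ∀ x : ℝ, deriv (fun y => (deriv u y)^2) x
      = 2 * deriv u x * deriv (deriv u) x := by
    intro x
    rw [show (fun y => (deriv u y)^2) = deriv u ^ 2 from rfl, ((hu2 x).hasDerivAt.pow 2).deriv]
    push_cast
    ring
  have hlipsq : ∀ s ∈ Ici (0:ℝ), ∀ t ∈ Ici (0:ℝ),
      |(deriv u s)^2 - (deriv u t)^2| ≤ (2*M*K) * |s - t| := by
    apply lip_aux _ hdsq
    intro x hx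
    rw [hderivsq x]
    have e2 : |2 * deriv u x * deriv (deriv u) x|
        = 2 * |deriv u x| * |deriv (deriv u) x| := by
      rw [abs_mul, abs_mul]; norm_num
    rw [e2]
    nlinarith [abs_nonneg (deriv u x), abs_nonneg (deriv (deriv u) x),
      hMu' x hx, hK2 x hx, mul_le_mul (hMu' x hx) (hK2 x hx)
        (abs_nonneg _) hM0.le]
  have hsqt : Tendsto (fun t => (deriv u t)^2) atTop (nhds 0) :=
    barbalat _ hsq (2*M*K) (by positivity) hlipsq step1sq
  have step1 : Tendsto (deriv u) atTop (nhds 0) := by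
    rw [tendsto_zero_iff_norm_tendsto_zero]
    have h0 := (Real.continuous_sqrt.tendsto' 0 0 (by simp)).comp hsqt
    have he : ((fun x => Real.sqrt x) ∘ fun t => deriv u t ^ 2)
        = fun x => |deriv u x| := by
      funext x
      simp [Function.comp, Real.sqrt_sq_eq_abs]
    rw [he] at h0
    simpa [Real.norm_eq_abs] using h0
  -- step 2 : a*u + u^p tends to 0
  set W : ℝ → ℝ := fun t => a * u t + u t ^ p with hWdef
  have hWc : Continuous W := (continuous_const.mul hcu).add hrpc
  have hdW : ∀ x : ℝ, HasDerivAt W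
      (a * deriv u x + deriv u x * p * u x ^ (p-1)) x := by
    intro x
    have hd1 : HasDerivAt u (deriv u x) x := (hu1 x).hasDerivAt
    exact (hd1.const_mul a).add (hd1.rpow_const (Or.inr hp.le))
  have hWdiff : Differentiable ℝ W := fun x => (hdW x).differentiableAt
  set L : ℝ := |a| * M + M * p * M^(p-1) + 1 with hLdef
  have hMp1 : (0:ℝ) < M^(p-1) := Real.rpow_pos_of_pos hM0 _
  have hLpos : 0 < L := by positivity
  have hlipW : ∀ s ∈ Ici (0:ℝ), ∀ t ∈ Ici (0:ℝ), |W s - W t| ≤ L * |s - t| := by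
    apply lip_aux _ hWdiff
    intro x hx
    rw [(hdW x).deriv]
    have b1 : |a * deriv u x| ≤ |a| * M := by
      rw [abs_mul]
      exact mul_le_mul_of_nonneg_left (hMu' x hx) (abs_nonneg a)
    have hpm : u x ^ (p-1) ≤ M^(p-1) :=
      Real.rpow_le_rpow (hupos x hx).le (hup x hx) (by linarith)
    have hpmnn : (0:ℝ) ≤ u x ^ (p-1) := Real.rpow_nonneg (hupos x hx).le _
    have b2 : |deriv u x * p * u x ^ (p-1)| ≤ M * p * M^(p-1) := by
      rw [abs_mul, abs_mul, abs_of_pos hp0, abs_of_nonneg hpmnn]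
      nlinarith [abs_nonneg (deriv u x), hMu' x hx,
        mul_le_mul (hMu' x hx) hpm hpmnn hM0.le]
    have tr := abs_add_le (a * deriv u x) (deriv u x * p * u x ^ (p-1))
    rw [hLdef]
    linarith
  have hWg : ∀ x ≥ (0:ℝ), deriv (deriv u) x + b * deriv u x + W x = g x := by
    intro x hx
    have := heq x hx
    rw [hWdef]
    dsimp only
    linarith
  have hintW : ∀ δ > (0:ℝ), ∀ ε > (0:ℝ), ∃ T, 0 ≤ T ∧
      ∀ t ≥ T, |∫ s in t..(t+δ), W s| ≤ ε := by
    intro δ hδ ε hε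
    set η : ℝ := ε / (2 * (2 + b * δ)) with hηdef
    have hηpos : 0 < η := by positivity
    obtain ⟨T₁, hT₁⟩ := (Metric.tendsto_atTop.mp step1) η hηpos
    obtain ⟨T₂, hT₂⟩ : ∃ T₂ : ℝ, ∀ t ≥ T₂,
        δ * (C₀ * M^p) * Real.exp (-t) ≤ ε/2 := by
      have htend : Tendsto (fun t : ℝ => δ * (C₀*M^p) * Real.exp (-t))
          atTop (nhds 0) := by
        simpa using Real.tendsto_exp_neg_atTop_nhds_zero.const_mul (δ * (C₀*M^p))
      have hev := htend.eventually (eventually_le_nhds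
        (by positivity : (0:ℝ) < ε/2))
      exact eventually_atTop.mp hev
    refine ⟨max (max T₁ T₂) 0, le_max_right _ 0, fun t ht => ?_⟩
    have htT₁ : T₁ ≤ t := le_trans (le_trans (le_max_left _ _) (le_max_left _ 0)) ht
    have htT₂ : T₂ ≤ t := le_trans (le_trans (le_max_right _ _) (le_max_left _ 0)) ht
    have ht0 : (0:ℝ) ≤ t := le_trans (le_max_right _ 0) ht
    have hI1 : ∫ x in t..(t+δ), deriv (deriv u) x = deriv u (t+δ) - deriv u t :=
      intervalIntegral.integral_eq_sub_of_hasDerivAt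
        (fun x _ => (hu2 x).hasDerivAt) (hc2.intervalIntegrable _ _)
    have hI2 : ∫ x in t..(t+δ), deriv u x = u (t+δ) - u t :=
      intervalIntegral.integral_eq_sub_of_hasDerivAt
        (fun x _ => (hu1 x).hasDerivAt) (hc1.intervalIntegrable _ _)
    have hsplit : ∫ x in t..(t+δ), (deriv (deriv u) x + b * deriv u x + W x)
        = (deriv u (t+δ) - deriv u t) + b * (u (t+δ) - u t)
          + ∫ x in t..(t+δ), W x := by
      rw [intervalIntegral.integral_add (f := fun x => deriv (deriv u) x + b * deriv u x) (g := W)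
          (((hc2.add (continuous_const.mul hc1))).intervalIntegrable _ _)
          (hWc.intervalIntegrable _ _),
        intervalIntegral.integral_add (f := deriv (deriv u)) (g := fun x => b * deriv u x) (hc2.intervalIntegrable _ _)
          ((continuous_const.mul hc1).intervalIntegrable _ _),
        intervalIntegral.integral_const_mul, hI1, hI2]
    have B1 : |∫ x in t..(t+δ), (deriv (deriv u) x + b * deriv u x + W x)|
        ≤ ε/2 := by
      have hbound : ∀ x ∈ Set.uIoc t (t+δ),
          ‖deriv (deriv u) x + b * deriv u x + W x‖ ≤ C₀ * M^p * Real.exp (-t) := by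
        intro x hx
        rw [Set.uIoc_of_le (by linarith : t ≤ t+δ)] at hx
        have hx0 : (0:ℝ) ≤ x := le_trans ht0 hx.1.le
        have := hWg x hx0
        rw [Real.norm_eq_abs, this]
        calc |g x| ≤ C₀ * M^p * Real.exp (-x) := hgb x hx0
          _ ≤ C₀ * M^p * Real.exp (-t) := by
            have := Real.exp_le_exp.mpr (by linarith [hx.1.le] : -x ≤ -t)
            nlinarith [mul_pos hC₀ hMp]
      have := intervalIntegral.norm_integral_le_of_norm_le_const hbound
      rw [Real.norm_eq_abs] at this
      have heq2 : |t + δ - t| = δ := by rw [show t + δ - t = δ by ring]; exact abs_of_pos hδ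
      rw [heq2] at this
      calc |∫ x in t..(t+δ), (deriv (deriv u) x + b * deriv u x + W x)|
          ≤ C₀ * M^p * Real.exp (-t) * δ := this
        _ = δ * (C₀ * M^p) * Real.exp (-t) := by ring
        _ ≤ ε/2 := hT₂ t htT₂
    have B2 : |deriv u (t+δ)| < η := by
      have := hT₁ (t+δ) (by linarith)
      rwa [Real.dist_eq, sub_zero] at this
    have B3 : |deriv u t| < η := by
      have := hT₁ t htT₁
      rwa [Real.dist_eq, sub_zero] at this
    have B4 : |u (t+δ) - u t| ≤ η * δ := by
      have hlipu : ∀ s ∈ Ici T₁, ∀ r ∈ Ici T₁, |u s - u r| ≤ η * |s - r| := by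
        apply lip_aux _ hu1
        intro x hx
        have := hT₁ x hx
        rw [Real.dist_eq, sub_zero] at this
        exact this.le
      have := hlipu (t+δ) (Set.mem_Ici.mpr (by linarith)) t (Set.mem_Ici.mpr htT₁)
      have heq3 : |t + δ - t| = δ := by rw [show t + δ - t = δ by ring]; exact abs_of_pos hδ
      rwa [heq3] at this
    -- combine
    have hIW : ∫ x in t..(t+δ), W x
        = (∫ x in t..(t+δ), (deriv (deriv u) x + b * deriv u x + W x))
          - (deriv u (t+δ) - deriv u t) - b * (u (t+δ) - u t) := by
      rw [hsplit]; ring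
    rw [hIW]
    have tr1 := abs_sub ((∫ x in t..(t+δ), (deriv (deriv u) x + b * deriv u x + W x))
        - (deriv u (t+δ) - deriv u t)) (b * (u (t+δ) - u t))
    have tr2 := abs_sub (∫ x in t..(t+δ), (deriv (deriv u) x + b * deriv u x + W x))
        (deriv u (t+δ) - deriv u t)
    have tr3 := abs_sub (deriv u (t+δ)) (deriv u t)
    have tr4 : |b * (u (t+δ) - u t)| ≤ b * (η * δ) := by
      rw [abs_mul, abs_of_pos hb]
      exact mul_le_mul_of_nonneg_left B4 hb.le
    have hηe : η * (2 + b * δ) = ε/2 := by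
      rw [hηdef]; field_simp
    nlinarith [tr1, tr2, tr3, tr4, B1, B2, B3]
  have step2 : Tendsto W atTop (nhds 0) := barbalat W hWc L hLpos hlipW hintW
  -- u'' → 0
  have hψt : Tendsto (fun t => deriv (deriv u) t + b * deriv u t + W t)
      atTop (nhds 0) := by
    apply squeeze_zero_norm' (a := fun t => C₀ * M^p * Real.exp (-t))
    · filter_upwards [eventually_ge_atTop (0:ℝ)] with t ht
      rw [Real.norm_eq_abs, hWg t ht]
      exact hgb t ht
    · simpa using Real.tendsto_exp_neg_atTop_nhds_zero.const_mul (C₀ * M^p)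
  have step3 : Tendsto (deriv (deriv u)) atTop (nhds 0) := by
    have heq4 : deriv (deriv u) = fun t =>
        (deriv (deriv u) t + b * deriv u t + W t) - b * deriv u t - W t := by
      funext t; ring
    rw [heq4]
    have hfin := (hψt.sub (step1.const_mul b)).sub step2
    simpa using hfin
  refine ⟨step1, step3, ?_⟩
  -- convergence of u
  set m : ℝ := (-a) ^ ((1:ℝ)/(p-1)) with hmdef
  have hnega : (0:ℝ) < -a := by linarith
  have hm0 : 0 < m := Real.rpow_pos_of_pos hnega _
  have hp1 : (0:ℝ) < p - 1 := by linarith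
  have hmp : m ^ (p-1) = -a := by
    rw [hmdef, ← Real.rpow_mul hnega.le,
      show (1:ℝ)/(p-1)*(p-1) = 1 by field_simp, Real.rpow_one]
  set c : ℝ := m/2 with hcdef
  have hc0 : 0 < c := by positivity
  have hcm : c < m := by rw [hcdef]; linarith
  have hcp : c ^ (p-1) < -a := by
    calc c ^ (p-1) < m ^ (p-1) := Real.rpow_lt_rpow hc0.le hcm hp1
      _ = -a := hmp
  set ρ : ℝ := c * (-a - c^(p-1)) with hρdef
  have hρ0 : 0 < ρ := mul_pos hc0 (by linarith)
  have hcpow : c ^ p = c ^ (p-1) * c := by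
    rw [show p = (p-1)+1 by ring, Real.rpow_add hc0, Real.rpow_one, show p-1+1-1 = p-1 by ring]
  have hWceq : a * c + c ^ p = -ρ := by
    rw [hcpow, hρdef]; ring
  obtain ⟨T₀', hT₀'⟩ := (Metric.tendsto_atTop.mp step2) ρ hρ0
  set T₀ : ℝ := max T₀' 0 with hT₀def
  have hT₀0 : (0:ℝ) ≤ T₀ := le_max_right _ _
  have hWsmall : ∀ t ≥ T₀, |W t| < ρ := by
    intro t ht
    have hd := hT₀' t (le_trans (le_max_left _ _) ht)
    rwa [Real.dist_eq, sub_zero] at hd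
  have hne : ∀ t ≥ T₀, u t ≠ c := by
    intro t ht huc
    have hWeq : W t = -ρ := by rw [hWdef]; dsimp only; rw [huc]; exact hWceq
    have hsm := hWsmall t ht
    rw [hWeq, abs_neg, abs_of_pos hρ0] at hsm
    exact lt_irrefl _ hsm
  have hdich : (∀ t ≥ T₀, u t < c) ∨ (∀ t ≥ T₀, c < u t) := by
    rcases lt_or_gt_of_ne (hne T₀ le_rfl) with hlt | hgt
    · left
      intro t ht
      by_contra hge
      push_neg at hge
      have hgt' : c < u t := lt_of_le_of_ne hge (hne t ht).symm
      obtain ⟨s, hs, hsc⟩ := intermediate_value_Icc ht hcu.continuousOn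
        (show c ∈ Icc (u T₀) (u t) from ⟨hlt.le, hgt'.le⟩)
      exact hne s hs.1 hsc
    · right
      intro t ht
      by_contra hge
      push_neg at hge
      have hlt' : u t < c := lt_of_le_of_ne hge (hne t ht)
      obtain ⟨s, hs, hsc⟩ := intermediate_value_Icc' ht hcu.continuousOn
        (show c ∈ Icc (u t) (u T₀) from ⟨hlt'.le, hgt.le⟩)
      exact hne s hs.1 hsc
  rcases hdich with hsmallu | hbigu
  · left
    set κ : ℝ := -a - c^(p-1) with hκdef
    have hκ0 : 0 < κ := by rw [hκdef]; linarith
    apply squeeze_zero_norm' (a := fun t => |W t| / κ)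
    · filter_upwards [eventually_ge_atTop T₀] with t ht
      have h1 : 0 < u t := hupos t (le_trans hT₀0 ht)
      have h2 : u t < c := hsmallu t ht
      have hup1 : u t ^ (p-1) ≤ c ^ (p-1) := Real.rpow_le_rpow h1.le h2.le hp1.le
      have hupp : u t ^ p = u t ^ (p-1) * u t := by
        rw [show p = (p-1)+1 by ring, Real.rpow_add h1, Real.rpow_one, show p-1+1-1 = p-1 by ring]
      have hWt : W t = u t * (a + u t ^ (p-1)) := by
        rw [hWdef]; dsimp only; rw [hupp]; ring
      have hWle : W t ≤ -κ * u t := by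
        rw [hWt, hκdef]
        nlinarith [hup1, h1]
      have hκu : κ * u t ≤ |W t| := by
        have hna := neg_abs_le (W t)
        nlinarith
      rw [Real.norm_eq_abs, abs_of_pos h1, le_div_iff₀ hκ0]
      linarith
    · have habsW : Tendsto (fun t => |W t|) atTop (nhds 0) := by
        simpa using step2.abs
      simpa using habsW.div_const κ
  · right
    have hkey : Tendsto (fun t => a + u t ^ (p-1)) atTop (nhds 0) := by
      apply squeeze_zero_norm' (a := fun t => |W t| / c)
      · filter_upwards [eventually_ge_atTop T₀] with t ht
        have h1 : 0 < u t := hupos t (le_trans hT₀0 ht)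
        have h2 : c < u t := hbigu t ht
        have hupp : u t ^ p = u t ^ (p-1) * u t := by
          rw [show p = (p-1)+1 by ring, Real.rpow_add h1, Real.rpow_one, show p-1+1-1 = p-1 by ring]
        have hWt : W t = u t * (a + u t ^ (p-1)) := by
          rw [hWdef]; dsimp only; rw [hupp]; ring
        rw [Real.norm_eq_abs, le_div_iff₀ hc0]
        calc |a + u t ^ (p-1)| * c ≤ |a + u t ^ (p-1)| * u t := by
              nlinarith [abs_nonneg (a + u t ^ (p-1))]
          _ = |W t| := by rw [hWt, abs_mul, abs_of_pos h1]; ring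
      · have habsW : Tendsto (fun t => |W t|) atTop (nhds 0) := by
          simpa using step2.abs
        simpa using habsW.div_const c
    have hto : Tendsto (fun t => u t ^ (p-1)) atTop (nhds (-a)) := by
      have hrw : (fun t => u t ^ (p-1)) = fun t => (a + u t ^ (p-1)) + (-a) := by
        funext t; ring
      rw [hrw]
      simpa using hkey.add_const (-a)
    have hcont : ContinuousAt (fun y : ℝ => y ^ ((1:ℝ)/(p-1))) (-a) :=
      Real.continuousAt_rpow_const _ _ (Or.inl (ne_of_gt hnega))
    have hcomp := hcont.tendsto.comp hto
    have heq5 : (fun y : ℝ => y ^ ((1:ℝ)/(p-1))) ∘ (fun t => u t ^ (p-1))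
        =ᶠ[atTop] u := by
      filter_upwards [eventually_ge_atTop (0:ℝ)] with t ht
      have h1 : 0 < u t := hupos t ht
      show (u t ^ (p-1)) ^ ((1:ℝ)/(p-1)) = u t
      rw [← Real.rpow_mul h1.le, show (p-1)*((1:ℝ)/(p-1)) = 1 by field_simp,
        Real.rpow_one]
    exact Tendsto.congr' heq5 hcomp
end

section
/- Let $n \geq 3$ and for $x_0 \in \mathbb{R}^n$, $\lambda > 0$, define the Kelvin transform of a function $w$ by $w_{x_0,\lambda}(x) = \left(\frac{\lambda}{|x-x_0|}\right)^{n-2} w\left(x_0 + \frac{\lambda^2 (x - x_0)}{|x - x_0|^2}\right)$. Suppose $w \in C^2(\mathbb{R}^n)$ is positive and satisfies $w_{x,\lambda}(y) \leq w(y)$ for all $x \in \mathbb{R}^n$, all $\lambda > 0$, and all $y$ with $|y - x| \geq \lambda$. Then $w$ is constant. -/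
/-- Kelvin transform of `w` with respect to the sphere `∂B_λ(x₀)`. -/
noncomputable def kelvin {n : ℕ} (w : EuclideanSpace ℝ (Fin n) → ℝ)
    (x₀ : EuclideanSpace ℝ (Fin n)) (l : ℝ) (x : EuclideanSpace ℝ (Fin n)) : ℝ :=
  (l / ‖x - x₀‖) ^ ((n : ℝ) - 2) * w (x₀ + (l ^ 2 / ‖x - x₀‖ ^ 2) • (x - x₀))

set_option maxHeartbeats 1000000
open Filter Topology

theorem stmt_15 (n : ℕ) (hn : 3 ≤ n) (w : EuclideanSpace ℝ (Fin n) → ℝ)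
    (hw : ContDiff ℝ 2 w) (hpos : ∀ x, 0 < w x)
    (hks : ∀ (x : EuclideanSpace ℝ (Fin n)) (l : ℝ), 0 < l →
      ∀ y : EuclideanSpace ℝ (Fin n), l ≤ ‖y - x‖ → kelvin w x l y ≤ w y) :
    ∀ y z : EuclideanSpace ℝ (Fin n), w y = w z := by
  have key : ∀ y z : EuclideanSpace ℝ (Fin n), w z ≤ w y := by
    intro y z
    rcases eq_or_ne y z with rfl | hyz
    · exact le_refl _
    have hnz : (0:ℝ) < ‖y - z‖ := by
      rw [norm_pos_iff]; exact sub_ne_zero.mpr hyz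
    have h : ∀ t : ℝ, 0 < t →
        Real.sqrt (t/(1+t)) ^ ((n:ℝ)-2) * w z ≤ w y := by
      intro t ht
      have ht1 : (0:ℝ) < 1 + t := by linarith
      set x : EuclideanSpace ℝ (Fin n) := z + t • (z - y) with hx
      set l : ℝ := Real.sqrt (t*(1+t)) * ‖y - z‖ with hl
      have hyx : y - x = (1+t) • (y - z) := by rw [hx]; module
      have hnyx : ‖y - x‖ = (1+t) * ‖y - z‖ := by
        rw [hyx, norm_smul, Real.norm_eq_abs, abs_of_pos ht1]
      have hlpos : 0 < l := by
        apply mul_pos _ hnz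
        exact Real.sqrt_pos.mpr (by positivity)
      have hle : l ≤ ‖y - x‖ := by
        rw [hnyx, hl]
        apply mul_le_mul_of_nonneg_right _ hnz.le
        calc Real.sqrt (t*(1+t)) ≤ Real.sqrt ((1+t)*(1+t)) :=
              Real.sqrt_le_sqrt (by nlinarith)
          _ = 1+t := Real.sqrt_mul_self ht1.le
      have hmain := hks x l hlpos y hle
      rw [kelvin] at hmain
      have hcoef : l ^ 2 / ‖y - x‖ ^ 2 = t / (1+t) := by
        rw [hnyx, hl, mul_pow, Real.sq_sqrt (by positivity)]
        field_simp
      have harg : x + (l ^ 2 / ‖y - x‖ ^ 2) • (y - x) = z := by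
        rw [hcoef, hyx, smul_smul, div_mul_cancel₀ _ (ne_of_gt ht1), hx]
        module
      have hsq : (l / ‖y - x‖) ^ 2 = t / (1+t) := by
        rw [div_pow, hcoef]
      have hratio : l / ‖y - x‖ = Real.sqrt (t/(1+t)) := by
        rw [← hsq, Real.sqrt_sq (div_nonneg hlpos.le (norm_nonneg _))]
      rw [harg, hratio] at hmain
      exact hmain
    have h1 : Tendsto (fun t : ℝ => t/(1+t)) atTop (𝓝 1) := by
      have h0 : Tendsto (fun t : ℝ => (1+t)⁻¹) atTop (𝓝 0) :=
        (tendsto_atTop_add_const_left _ 1 tendsto_id).inv_tendsto_atTop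
      have h2 : Tendsto (fun t : ℝ => 1 - (1+t)⁻¹) atTop (𝓝 (1 - 0)) :=
        (tendsto_const_nhds : Tendsto (fun _ : ℝ => (1:ℝ)) atTop (𝓝 1)).sub h0
      rw [sub_zero] at h2
      apply h2.congr'
      filter_upwards [eventually_gt_atTop 0] with t ht
      have : (1:ℝ) + t ≠ 0 := by linarith
      field_simp
      ring
    have h2 : Tendsto (fun t : ℝ => Real.sqrt (t/(1+t)) ^ ((n:ℝ)-2) * w z)
        atTop (𝓝 (w z)) := by
      have hs : Tendsto (fun t : ℝ => Real.sqrt (t/(1+t))) atTop (𝓝 1) := by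
        have := (Real.continuous_sqrt.tendsto 1).comp h1
        simpa [Function.comp_def] using this
      have hr : Tendsto (fun t : ℝ => Real.sqrt (t/(1+t)) ^ ((n:ℝ)-2))
          atTop (𝓝 1) := by
        have := (Real.continuousAt_rpow_const 1 ((n:ℝ)-2) (Or.inl one_ne_zero)).tendsto.comp hs
        simpa [Function.comp_def] using this
      simpa using hr.mul_const (w z)
    exact le_of_tendsto h2
      (by filter_upwards [eventually_gt_atTop 0] with t ht using h t ht)
  intro y z
  exact le_antisymm (key z y) (key y z)
end

section
/- Let $b > 0$, $\lambda_1 < \lambda_2 < 0$, $T_0 > 0$, $\mu_1 \le \mu_2 < 0$ with $\mu_i = \lambda_i$, and let $\xi : [T_0, \infty) \to \mathbb{R}$ be continuous and satisfy, for some constants $C > 0$ and $0 < \epsilon < -\mu_2$, the integral inequality $|\xi(t)| \leq C e^{\mu_1 t} + C e^{\mu_2 t} + C e^{-t} + \frac{\epsilon}{4} e^{\mu_1 t} \int_{T_0}^t e^{-\mu_1 s} |\xi(s)|\, ds + \frac{\epsilon}{4} e^{\mu_2 t} \int_{T_0}^t e^{-\mu_2 s} |\xi(s)|\, ds$ for all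 $t \geq T_0$. Then there exists $C' > 0$ such that $|\xi(t)| \leq C' e^{-(\alpha_0 - \epsilon/2) t}$ for all $t \geq T_0$, where $\alpha_0 = \min\{-\mu_2, 1\}$. -/
open Set intervalIntegral

set_option maxHeartbeats 1000000 in
theorem stmt_18 (b l₁ l₂ T₀ C ε : ℝ) (hb : 0 < b) (hl : l₁ < l₂) (hl₂ : l₂ < 0)
    (hT₀ : 0 < T₀) (hC : 0 < C) (hε₀ : 0 < ε) (hε : ε < -l₂)
    (μ₁ μ₂ α₀ : ℝ) (hμ₁ : μ₁ = l₁) (hμ₂ : μ₂ = l₂) (hα₀ : α₀ = min (-μ₂) 1)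
    (ξ : ℝ → ℝ) (hξ : Continuous ξ)
    (hineq : ∀ t ≥ T₀, |ξ t| ≤
      C * Real.exp (μ₁ * t) + C * Real.exp (μ₂ * t) + C * Real.exp (-t)
        + (ε / 4) * Real.exp (μ₁ * t) * ∫ s in T₀..t, Real.exp (-μ₁ * s) * |ξ s|
        + (ε / 4) * Real.exp (μ₂ * t) * ∫ s in T₀..t, Real.exp (-μ₂ * s) * |ξ s|) :
    ∃ C' > 0, ∀ t ≥ T₀, |ξ t| ≤ C' * Real.exp (-(α₀ - ε / 2) * t) := by
  subst hμ₁ hμ₂ hα₀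
  have hμ₁neg : μ₁ < 0 := hl.trans hl₂
  set a := min (-μ₂) 1 with ha
  have ha0 : 0 < a := lt_min (by linarith) one_pos
  have ha1 : a ≤ -μ₂ := min_le_left _ _
  have ha2 : a ≤ 1 := min_le_right _ _
  set β : ℝ := -a - μ₂ with hβdef
  have hβ : 0 ≤ β := by simp only [hβdef]; linarith
  set γ : ℝ := β - ε/2 with hγdef
  set f : ℝ → ℝ := fun s => Real.exp (-μ₂ * s) * |ξ s| with hfdef
  have hf_cont : Continuous f := by fun_prop
  set F : ℝ → ℝ := fun t => ∫ s in T₀..t, f s with hFdef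
  -- Step 1: the key pointwise inequality
  have key : ∀ t ≥ T₀, f t ≤ 3*C*Real.exp (β*t) + ε/2 * F t := by
    intro t ht
    have ht0 : 0 < t := lt_of_lt_of_le hT₀ ht
    have hFt : F t = ∫ s in T₀..t, Real.exp (-μ₂*s) * |ξ s| := rfl
    have hFt_nonneg : 0 ≤ F t :=
      intervalIntegral.integral_nonneg ht (fun s _ => by positivity)
    have hcont1 : Continuous (fun s => Real.exp (-μ₁*s) * |ξ s|) := by fun_prop
    have h0 : |ξ t| ≤ C * Real.exp (μ₁ * t) + C * Real.exp (μ₂ * t) + C * Real.exp (-t)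
        + ε/4 * Real.exp (μ₁*t) *
          ∫ s in T₀..t, (Real.exp (-μ₁*s) * |ξ s| + ε/4 * Real.exp (μ₂*t) * F t) :=
      hineq t ht
    have hsplit : (∫ s in T₀..t, (Real.exp (-μ₁*s) * |ξ s| + ε/4 * Real.exp (μ₂*t) * F t))
        = (∫ s in T₀..t, Real.exp (-μ₁*s) * |ξ s|) + (t - T₀) * (ε/4 * Real.exp (μ₂*t) * F t) := by
      rw [intervalIntegral.integral_add (hcont1.intervalIntegrable _ _) intervalIntegrable_const,
        intervalIntegral.integral_const, smul_eq_mul]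
    rw [hsplit, mul_add] at h0
    have E1 : Real.exp (μ₁*t) ≤ Real.exp (-a*t) :=
      Real.exp_le_exp.2 (mul_le_mul_of_nonneg_right (by linarith) ht0.le)
    have E2 : Real.exp (μ₂*t) ≤ Real.exp (-a*t) :=
      Real.exp_le_exp.2 (mul_le_mul_of_nonneg_right (by linarith) ht0.le)
    have E3 : Real.exp (-t) ≤ Real.exp (-a*t) := by
      apply Real.exp_le_exp.2
      have := mul_le_mul_of_nonneg_right ha2 ht0.le
      linarith
    have c1 : C * Real.exp (μ₁*t) ≤ C * Real.exp (-a*t) := mul_le_mul_of_nonneg_left E1 hC.le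
    have c2 : C * Real.exp (μ₂*t) ≤ C * Real.exp (-a*t) := mul_le_mul_of_nonneg_left E2 hC.le
    have c3 : C * Real.exp (-t) ≤ C * Real.exp (-a*t) := mul_le_mul_of_nonneg_left E3 hC.le
    have hI : ε/4 * Real.exp (μ₁*t) * (∫ s in T₀..t, Real.exp (-μ₁*s) * |ξ s|)
        ≤ ε/4 * (Real.exp (μ₂*t) * F t) := by
      have key2 : Real.exp (μ₁*t) * ∫ s in T₀..t, Real.exp (-μ₁*s) * |ξ s|
          ≤ Real.exp (μ₂*t) * ∫ s in T₀..t, Real.exp (-μ₂*s) * |ξ s| := by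
        rw [← intervalIntegral.integral_const_mul, ← intervalIntegral.integral_const_mul]
        apply intervalIntegral.integral_mono_on ht
        · exact (by fun_prop : Continuous fun s => Real.exp (μ₁*t) * (Real.exp (-μ₁*s) * |ξ s|)).intervalIntegrable _ _
        · exact (by fun_prop : Continuous fun s => Real.exp (μ₂*t) * (Real.exp (-μ₂*s) * |ξ s|)).intervalIntegrable _ _
        · intro s hs
          rw [← mul_assoc, ← Real.exp_add, ← mul_assoc, ← Real.exp_add]
          apply mul_le_mul_of_nonneg_right _ (abs_nonneg _)
          apply Real.exp_le_exp.2
          nlinarith [mul_nonneg (show (0:ℝ) ≤ μ₂ - μ₁ by linarith)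
            (show (0:ℝ) ≤ t - s by linarith [hs.2])]
      rw [hFt]
      calc ε/4 * Real.exp (μ₁*t) * (∫ s in T₀..t, Real.exp (-μ₁*s) * |ξ s|)
          = ε/4 * (Real.exp (μ₁*t) * ∫ s in T₀..t, Real.exp (-μ₁*s) * |ξ s|) := by ring
        _ ≤ ε/4 * (Real.exp (μ₂*t) * ∫ s in T₀..t, Real.exp (-μ₂*s) * |ξ s|) :=
            mul_le_mul_of_nonneg_left key2 (by positivity)
    have hte : (t - T₀) * Real.exp (μ₁*t) ≤ 1/(-μ₁) := by
      rw [le_div_iff₀ (by linarith : (0:ℝ) < -μ₁)]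
      have hmul : Real.exp (-μ₁*t) * Real.exp (μ₁*t) = 1 := by
        rw [← Real.exp_add]; norm_num
      nlinarith [mul_le_mul_of_nonneg_right (Real.add_one_le_exp (-μ₁*t)) (Real.exp_pos (μ₁*t)).le,
        Real.exp_pos (μ₁*t), mul_nonneg (mul_nonneg (show (0:ℝ) ≤ -μ₁ by linarith) hT₀.le)
          (Real.exp_pos (μ₁*t)).le]
    have hB2 : ε/4 * Real.exp (μ₁*t) * ((t - T₀) * (ε/4 * Real.exp (μ₂*t) * F t))
        ≤ ε/4 * (Real.exp (μ₂*t) * F t) := by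
      have h1 : ε/4 * Real.exp (μ₁*t) * ((t - T₀) * (ε/4 * Real.exp (μ₂*t) * F t))
          = ((t - T₀) * Real.exp (μ₁*t)) * (ε/4 * (ε/4 * (Real.exp (μ₂*t) * F t))) := by ring
      have hnn : (0:ℝ) ≤ ε/4 * (ε/4 * (Real.exp (μ₂*t) * F t)) := by positivity
      have h2 : ((t - T₀) * Real.exp (μ₁*t)) * (ε/4 * (ε/4 * (Real.exp (μ₂*t) * F t)))
          ≤ (1/(-μ₁)) * (ε/4 * (ε/4 * (Real.exp (μ₂*t) * F t))) :=
        mul_le_mul_of_nonneg_right hte hnn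
      have h3 : (1/(-μ₁)) * (ε/4 * (ε/4 * (Real.exp (μ₂*t) * F t)))
          ≤ ε/4 * (Real.exp (μ₂*t) * F t) := by
        have hεμ : ε/(4*(-μ₁)) ≤ 1 := by
          rw [div_le_one (by linarith)]
          linarith
        have hrw : (1/(-μ₁)) * (ε/4 * (ε/4 * (Real.exp (μ₂*t) * F t)))
            = (ε/(4*(-μ₁))) * (ε/4 * (Real.exp (μ₂*t) * F t)) := by
          field_simp
        rw [hrw]
        have := mul_le_mul_of_nonneg_right hεμ (show (0:ℝ) ≤ ε/4 * (Real.exp (μ₂*t) * F t) by positivity)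
        linarith
      rw [h1]
      exact h2.trans h3
    have hx : |ξ t| ≤ 3*C*Real.exp (-a*t) + ε/2 * (Real.exp (μ₂*t) * F t) := by
      have hIrw : ε/4 * Real.exp (μ₁*t) * (∫ s in T₀..t, Real.exp (-μ₁*s) * |ξ s|)
          + ε/4 * Real.exp (μ₁*t) * ((t - T₀) * (ε/4 * Real.exp (μ₂*t) * F t))
          ≤ ε/2 * (Real.exp (μ₂*t) * F t) := by linarith
      linarith [h0]
    have hmul := mul_le_mul_of_nonneg_left hx (Real.exp_nonneg (-μ₂*t))
    have hee1 : Real.exp (-μ₂*t) * Real.exp (-a*t) = Real.exp (β*t) := by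
      rw [← Real.exp_add]
      congr 1
      rw [hβdef]; ring
    have hee2 : Real.exp (-μ₂*t) * Real.exp (μ₂*t) = 1 := by
      rw [← Real.exp_add]; norm_num
    calc f t = Real.exp (-μ₂*t) * |ξ t| := rfl
      _ ≤ Real.exp (-μ₂*t) * (3*C*Real.exp (-a*t) + ε/2 * (Real.exp (μ₂*t) * F t)) := hmul
      _ = 3*C*(Real.exp (-μ₂*t) * Real.exp (-a*t))
          + ε/2 * ((Real.exp (-μ₂*t) * Real.exp (μ₂*t)) * F t) := by ring
      _ = 3*C*Real.exp (β*t) + ε/2 * F t := by rw [hee1, hee2]; ring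
  -- Step 2: Gronwall
  have hF' : ∀ t, HasDerivAt F (f t) t := fun t =>
    intervalIntegral.integral_hasDerivAt_right (hf_cont.intervalIntegrable _ _)
      hf_cont.aestronglyMeasurable.stronglyMeasurableAtFilter hf_cont.continuousAt
  set G : ℝ → ℝ := fun t => Real.exp (-(ε/2)*t) * F t with hGdef
  have hG' : ∀ t, HasDerivAt G (Real.exp (-(ε/2)*t) * f t
      + (Real.exp (-(ε/2)*t) * (-(ε/2))) * F t) t := by
    intro t
    have h1 : HasDerivAt (fun t => Real.exp (-(ε/2)*t)) (Real.exp (-(ε/2)*t) * (-(ε/2))) t := by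
      simpa using ((hasDerivAt_id t).const_mul (-(ε/2))).exp
    have h2 := h1.mul (hF' t)
    exact h2.congr_deriv (by ring)
  set g : ℝ → ℝ := fun s => 3*C*Real.exp (γ*s) with hgdef
  have hg_cont : Continuous g := by fun_prop
  set H : ℝ → ℝ := fun t => ∫ s in T₀..t, g s with hHdef
  have hH' : ∀ t, HasDerivAt H (g t) t := fun t =>
    intervalIntegral.integral_hasDerivAt_right (hg_cont.intervalIntegrable _ _)
      hg_cont.aestronglyMeasurable.stronglyMeasurableAtFilter hg_cont.continuousAt
  have hGH : ∀ t ≥ T₀, G t ≤ H t := by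
    intro t ht
    have hdiff : Differentiable ℝ (fun t => H t - G t) := fun x =>
      ((hH' x).sub (hG' x)).differentiableAt
    have hmono : MonotoneOn (fun t => H t - G t) (Ici T₀) := by
      apply monotoneOn_of_deriv_nonneg (convex_Ici T₀) hdiff.continuous.continuousOn
        (fun x _ => (hdiff x).differentiableWithinAt)
      intro x hx
      rw [interior_Ici] at hx
      show 0 ≤ deriv (H - G) x
      rw [((hH' x).sub (hG' x)).deriv]
      have hk := key x (le_of_lt hx)
      have hexp : Real.exp (-(ε/2)*x) * (3*C*Real.exp (β*x)) = 3*C*Real.exp (γ*x) := by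
        have h5 : Real.exp (-(ε/2)*x) * Real.exp (β*x) = Real.exp (γ*x) := by
          rw [← Real.exp_add]
          congr 1
          rw [hγdef]; ring
        calc Real.exp (-(ε/2)*x) * (3*C*Real.exp (β*x))
            = 3*C*(Real.exp (-(ε/2)*x) * Real.exp (β*x)) := by ring
          _ = 3*C*Real.exp (γ*x) := by rw [h5]
      have hpos : (0:ℝ) < Real.exp (-(ε/2)*x) := Real.exp_pos _
      have h2 : Real.exp (-(ε/2)*x) * f x
          ≤ Real.exp (-(ε/2)*x) * (3*C*Real.exp (β*x) + ε/2 * F x) :=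
        mul_le_mul_of_nonneg_left hk hpos.le
      simp only [hgdef]
      nlinarith [h2, hexp]
    have hm := hmono self_mem_Ici ht ht
    have hG0 : G T₀ = 0 := by
      simp only [hGdef, hFdef, intervalIntegral.integral_same, mul_zero]
    have hH0 : H T₀ = 0 := by
      simp only [hHdef, intervalIntegral.integral_same]
    simp only [hH0, hG0, sub_zero] at hm
    linarith
  have hFbound : ∀ t ≥ T₀, F t ≤ Real.exp ((ε/2)*t) * H t := by
    intro t ht
    have h2 := mul_le_mul_of_nonneg_left (hGH t ht) (Real.exp_pos ((ε/2)*t)).le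
    have h3 : Real.exp ((ε/2)*t) * G t = F t := by
      simp only [hGdef]
      rw [← mul_assoc, ← Real.exp_add]
      norm_num
    linarith
  have hxi : ∀ t, |ξ t| = Real.exp (μ₂*t) * f t := by
    intro t
    simp only [hfdef]
    rw [← mul_assoc, ← Real.exp_add]
    norm_num
  have hfinal : ∀ t ≥ T₀, |ξ t| ≤ 3*C*Real.exp ((-a)*t) + ε/2 * Real.exp ((μ₂+ε/2)*t) * H t := by
    intro t ht
    rw [hxi t]
    have hk := key t ht
    have hFb := hFbound t ht
    have hpos : (0:ℝ) < Real.exp (μ₂*t) := Real.exp_pos _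
    calc Real.exp (μ₂*t) * f t ≤ Real.exp (μ₂*t) * (3*C*Real.exp (β*t) + ε/2 * F t) :=
          mul_le_mul_of_nonneg_left hk hpos.le
      _ ≤ Real.exp (μ₂*t) * (3*C*Real.exp (β*t) + ε/2 * (Real.exp ((ε/2)*t) * H t)) := by
          have h7 : ε/2 * F t ≤ ε/2 * (Real.exp ((ε/2)*t) * H t) :=
            mul_le_mul_of_nonneg_left hFb (by positivity)
          nlinarith [hpos]
      _ = 3*C*(Real.exp (μ₂*t) * Real.exp (β*t))
          + ε/2 * ((Real.exp (μ₂*t) * Real.exp ((ε/2)*t)) * H t) := by ring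
      _ = 3*C*Real.exp ((-a)*t) + ε/2 * Real.exp ((μ₂+ε/2)*t) * H t := by
          rw [← Real.exp_add, ← Real.exp_add]
          have e1 : μ₂*t + β*t = -a*t := by rw [hβdef]; ring
          have e2 : μ₂*t + (ε/2)*t = (μ₂+ε/2)*t := by ring
          rw [e1, e2]; ring
  rcases le_or_gt 0 γ with hγ | hγ
  · -- γ ≥ 0
    refine ⟨9*C, by positivity, fun t ht => ?_⟩
    have ht0 : 0 < t := lt_of_lt_of_le hT₀ ht
    have hHb : H t ≤ (12*C/ε) * Real.exp ((γ + ε/4)*t) := by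
      have h1 : H t ≤ (t - T₀) * (3*C*Real.exp (γ*t)) := by
        have h1' : (∫ s in T₀..t, g s) ≤ ∫ _s in T₀..t, 3*C*Real.exp (γ*t) := by
          apply intervalIntegral.integral_mono_on ht (hg_cont.intervalIntegrable _ _)
            intervalIntegrable_const
          intro s hs
          simp only [hgdef]
          have h8 : Real.exp (γ*s) ≤ Real.exp (γ*t) :=
            Real.exp_le_exp.2 (mul_le_mul_of_nonneg_left hs.2 hγ)
          nlinarith [hC]
        rw [intervalIntegral.integral_const, smul_eq_mul] at h1'
        exact h1'
      have h2 : t - T₀ ≤ (4/ε) * Real.exp ((ε/4)*t) := by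
        have h3 : (ε/4)*t ≤ Real.exp ((ε/4)*t) := by
          nlinarith [Real.add_one_le_exp ((ε/4)*t)]
        have h4 : t ≤ (4/ε) * Real.exp ((ε/4)*t) := by
          have h5 := mul_le_mul_of_nonneg_left h3 (by positivity : (0:ℝ) ≤ 4/ε)
          have h6 : (4/ε) * ((ε/4)*t) = t := by field_simp
          linarith
        linarith
      calc H t ≤ (t - T₀) * (3*C*Real.exp (γ*t)) := h1
        _ ≤ ((4/ε) * Real.exp ((ε/4)*t)) * (3*C*Real.exp (γ*t)) :=
            mul_le_mul_of_nonneg_right h2 (by positivity)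
        _ = (12*C/ε) * (Real.exp ((ε/4)*t) * Real.exp (γ*t)) := by ring
        _ = (12*C/ε) * Real.exp ((γ + ε/4)*t) := by
            rw [← Real.exp_add]
            congr 1
            ring
    have h4 := hfinal t ht
    have h5 : ε/2 * Real.exp ((μ₂+ε/2)*t) * H t
        ≤ ε/2 * Real.exp ((μ₂+ε/2)*t) * ((12*C/ε) * Real.exp ((γ + ε/4)*t)) :=
      mul_le_mul_of_nonneg_left hHb (by positivity)
    have h6 : ε/2 * Real.exp ((μ₂+ε/2)*t) * ((12*C/ε) * Real.exp ((γ + ε/4)*t))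
        = 6*C*Real.exp ((-a + ε/4)*t) := by
      have h9 : Real.exp ((μ₂+ε/2)*t) * Real.exp ((γ + ε/4)*t) = Real.exp ((-a + ε/4)*t) := by
        rw [← Real.exp_add]
        congr 1
        rw [hγdef, hβdef]; ring
      calc ε/2 * Real.exp ((μ₂+ε/2)*t) * ((12*C/ε) * Real.exp ((γ + ε/4)*t))
          = (ε/2 * (12*C/ε)) * (Real.exp ((μ₂+ε/2)*t) * Real.exp ((γ + ε/4)*t)) := by ring
        _ = (ε/2 * (12*C/ε)) * Real.exp ((-a + ε/4)*t) := by rw [h9]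
        _ = 6*C*Real.exp ((-a + ε/4)*t) := by
            have : ε/2 * (12*C/ε) = 6*C := by field_simp; ring
            rw [this]
    have e7 : Real.exp ((-a)*t) ≤ Real.exp ((-a + ε/2)*t) :=
      Real.exp_le_exp.2 (mul_le_mul_of_nonneg_right (by linarith) ht0.le)
    have e8 : Real.exp ((-a + ε/4)*t) ≤ Real.exp ((-a + ε/2)*t) :=
      Real.exp_le_exp.2 (mul_le_mul_of_nonneg_right (by linarith) ht0.le)
    have hgoal : -(a - ε/2) = -a + ε/2 := by ring
    rw [hgoal]
    nlinarith [mul_le_mul_of_nonneg_left e7 (by positivity : (0:ℝ) ≤ 3*C),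
      mul_le_mul_of_nonneg_left e8 (by positivity : (0:ℝ) ≤ 6*C)]
  · -- γ < 0
    have hγpos0 : (0:ℝ) < -γ := by linarith
    refine ⟨3*C + ε/2*(3*C/(-γ)), by
      have h11 : (0:ℝ) < ε/2*(3*C/(-γ)) := mul_pos (by positivity) (div_pos (by positivity) hγpos0)
      linarith, fun t ht => ?_⟩
    have ht0 : 0 < t := lt_of_lt_of_le hT₀ ht
    have hγne : γ ≠ 0 := ne_of_lt hγ
    have hHb : H t ≤ 3*C/(-γ) := by
      have hder : ∀ s : ℝ, HasDerivAt (fun x => 3*C*Real.exp (γ*x)/γ) (3*C*Real.exp (γ*s)) s := by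
        intro s
        have h1 : HasDerivAt (fun x : ℝ => Real.exp (γ*x)) (Real.exp (γ*s) * γ) s := by
          simpa using ((hasDerivAt_id s).const_mul γ).exp
        have h2 := (h1.const_mul (3*C)).div_const γ
        exact h2.congr_deriv (by rw [mul_div_assoc, mul_div_cancel_right₀ _ hγne])
      have hval : H t = 3*C*Real.exp (γ*t)/γ - 3*C*Real.exp (γ*T₀)/γ :=
        intervalIntegral.integral_eq_sub_of_hasDerivAt (a := T₀) (b := t)
          (fun s _ => hder s)
          ((by fun_prop : Continuous fun s => 3*C*Real.exp (γ*s)).intervalIntegrable T₀ t)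
      rw [hval]
      have hexp1 : Real.exp (γ*T₀) ≤ 1 :=
        Real.exp_le_one_iff.2 (by nlinarith [mul_pos (neg_pos.2 hγ) hT₀])
      have hexp2 : 0 < Real.exp (γ*t) := Real.exp_pos _
      have hγpos : (0:ℝ) < -γ := by linarith
      have hL : (3*C*Real.exp (γ*t) - 3*C*Real.exp (γ*T₀))/γ
          = (3*C*Real.exp (γ*T₀) - 3*C*Real.exp (γ*t))/(-γ) := by
        rw [div_eq_div_iff hγne (by linarith : (-γ) ≠ 0)]
        ring
      rw [div_sub_div_same, hL]
      gcongr
      nlinarith [hexp1, hexp2, hC]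
    have h4 := hfinal t ht
    have h5 : ε/2 * Real.exp ((μ₂+ε/2)*t) * H t
        ≤ ε/2 * Real.exp ((μ₂+ε/2)*t) * (3*C/(-γ)) :=
      mul_le_mul_of_nonneg_left hHb (by positivity)
    have e7 : Real.exp ((-a)*t) ≤ Real.exp ((-a + ε/2)*t) :=
      Real.exp_le_exp.2 (mul_le_mul_of_nonneg_right (by linarith) ht0.le)
    have e8 : Real.exp ((μ₂+ε/2)*t) ≤ Real.exp ((-a + ε/2)*t) :=
      Real.exp_le_exp.2 (mul_le_mul_of_nonneg_right (by linarith) ht0.le)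
    have hgoal : -(a - ε/2) = -a + ε/2 := by ring
    rw [hgoal]
    have k1 : 3*C*Real.exp ((-a)*t) ≤ 3*C*Real.exp ((-a + ε/2)*t) :=
      mul_le_mul_of_nonneg_left e7 (by positivity)
    have k2 : ε/2 * Real.exp ((μ₂+ε/2)*t) * (3*C/(-γ))
        ≤ (ε/2*(3*C/(-γ))) * Real.exp ((-a + ε/2)*t) := by
      have h10 := mul_le_mul_of_nonneg_left e8
        (le_of_lt (mul_pos (by positivity) (div_pos (by positivity) hγpos0)) : (0:ℝ) ≤ ε/2 * (3*C/(-γ)))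
      calc ε/2 * Real.exp ((μ₂+ε/2)*t) * (3*C/(-γ))
          = ε/2 * (3*C/(-γ)) * Real.exp ((μ₂+ε/2)*t) := by ring
        _ ≤ ε/2 * (3*C/(-γ)) * Real.exp ((-a + ε/2)*t) := h10
    calc |ξ t| ≤ 3*C*Real.exp ((-a)*t) + ε/2 * Real.exp ((μ₂+ε/2)*t) * H t := h4
      _ ≤ 3*C*Real.exp ((-a + ε/2)*t) + (ε/2*(3*C/(-γ))) * Real.exp ((-a + ε/2)*t) := by
          linarith
      _ = (3*C + ε/2*(3*C/(-γ))) * Real.exp ((-a + ε/2)*t) := by ring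
end
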